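/- If Λ ⊆ Σ_A is an Ott-Tomforde-Willis shift space, then its image Λ^(M) = Ξ^(M)(Λ) under the M-th higher block code is a shift space in Σ_{A^(M)}: it is closed, shift-invariant, and satisfies the infinite extension property. -/

import Mathlib

namespace OTW

/-- The Ott-Tomforde-Willis full shift `Σ_A`: sequences over `A ∪ {õ}` (with `õ = none`)
such that once the empty letter `õ` appears, it repeats forever. -/
@[ext]
structure FullShift (A : Type*) where
  val : ℕ → Option A
  tail : ∀ i, val i = none → val (i + 1) = none

variable {A B : Type*}

/-- The shift map `σ`. -/
def shiftMap (x : FullShift A) : FullShift A :=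
  ⟨fun i => x.val (i + 1), fun i hi => x.tail (i + 1) hi⟩

/-- The empty sequence `Ø`. -/
def emptySeq : FullShift A :=
  ⟨fun _ => none, fun _ _ => rfl⟩

theorem val_none_mono (x : FullShift A) :
    ∀ {k m : ℕ}, k ≤ m → x.val k = none → x.val m = none := by
  intro k m h hk
  induction m, h using Nat.le_induction with
  | base => exact hk
  | succ m hm ih => exact x.tail m ih

/-- The finite sequence determined by a word `w : List A`. -/
def finSeq (w : List A) : FullShift A where
  val i := (w.drop i).head?
  tail := by
    intro i hi
    rw [List.head?_eq_none_iff] at hi ⊢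
    rw [List.drop_eq_nil_iff] at hi ⊢
    omega

/-- Generalized cylinder `Z(w, F)`. -/
def Zcyl (w : List A) (F : Finset A) : Set (FullShift A) :=
  {x | (∀ i : Fin w.length, x.val i = some (w.get i)) ∧ ∀ a ∈ F, x.val w.length ≠ some a}

/-- The topology on `Σ_A` generated by the generalized cylinders. -/
instance : TopologicalSpace (FullShift A) :=
  TopologicalSpace.generateFrom {S | ∃ (w : List A) (F : Finset A), S = Zcyl w F}

/-- The letters `L_Λ` used by sequences of `Λ`. -/
def letters (Λ : Set (FullShift A)) : Set A :=
  {a | ∃ x ∈ Λ, ∃ i, x.val i = some a}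

/-- `w` is a (fully lettered) block appearing in some sequence of `Λ`. -/
def IsBlock (Λ : Set (FullShift A)) (w : List A) : Prop :=
  ∃ x ∈ Λ, ∃ n, ∀ i : Fin w.length, x.val (n + i) = some (w.get i)

/-- Ott-Tomforde-Willis shift space: closed, shift invariant, with the
infinite extension property. -/
def IsShiftSpace (Λ : Set (FullShift A)) : Prop :=
  IsClosed Λ ∧ (∀ x ∈ Λ, shiftMap x ∈ Λ) ∧
    (emptySeq ∈ Λ ↔ (letters Λ).Infinite) ∧
    (∀ w : List A, w ≠ [] → (finSeq w ∈ Λ ↔ {b : A | IsBlock Λ (w ++ [b])}.Infinite))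

/-- `x` begins with the block `b` (a word over the extended alphabet `A ∪ {õ}`). -/
def Prefixed (x : FullShift A) (b : List (Option A)) : Prop :=
  ∀ i : Fin b.length, x.val i = b.get i

/-- `(P, Q)` is a representation of `C` as a finitely defined set in `Λ`:
membership in `C` is witnessed by an initial block in `P`, and membership in the
complement by an initial block in `Q`. -/
def FDRep (Λ C : Set (FullShift A)) (P Q : Set (List (Option A))) : Prop :=
  (∀ b ∈ P, b ≠ []) ∧ (∀ b ∈ Q, b ≠ []) ∧
    C = {x ∈ Λ | ∃ b ∈ P, Prefixed x b} ∧
    Λ \ C = {x ∈ Λ | ∃ b ∈ Q, Prefixed x b}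

/-- `C` is a finitely defined set in `Λ`. -/
def FinitelyDefinedIn (Λ C : Set (FullShift A)) : Prop :=
  ∃ P Q, FDRep Λ C P Q

/-- `S` is a finite (possibly empty) union of generalized cylinders of `Λ`. -/
def IsFinUnionCyl (Λ S : Set (FullShift A)) : Prop :=
  ∃ (n : ℕ) (w : Fin n → List A) (F : Fin n → Finset A),
    S = Λ ∩ ⋃ i, Zcyl (w i) (F i)

/-- `Φ` is the sliding block code determined by the partition `{C_a}` of `Λ` into
finitely defined sets, with `C_õ` shift invariant. -/
def IsSBCWith (Λ : Set (FullShift A)) (Φ : FullShift A → FullShift B)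
    (C : Option B → Set (FullShift A)) : Prop :=
  (∀ a, C a ⊆ Λ) ∧ (∀ x ∈ Λ, ∃! a, x ∈ C a) ∧
    (∀ a, FinitelyDefinedIn Λ (C a)) ∧
    (∀ x ∈ C none, shiftMap x ∈ C none) ∧
    (∀ x ∈ Λ, ∀ n : ℕ, shiftMap^[n] x ∈ C ((Φ x).val n))

/-- Sliding block code. -/
def IsSlidingBlockCode (Λ : Set (FullShift A)) (Φ : FullShift A → FullShift B) : Prop :=
  ∃ C, IsSBCWith Λ Φ C

/-- Row-finite shift: every letter has a finite follower set. -/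
def RowFinite (Λ : Set (FullShift A)) : Prop :=
  ∀ a ∈ letters Λ, {b : A | IsBlock Λ [a, b]}.Finite

/-- The `M`-th higher block code `Ξ^(M)`. -/
noncomputable def higherBlock (M : ℕ) (x : FullShift A) : FullShift (Fin M → A) where
  val i := if h : ∀ j : Fin M, (x.val (i + j)).isSome then
      some (fun j => (x.val (i + j)).get (h j)) else none
  tail := by
    intro i hi
    try dsimp only at hi ⊢
    have h1 : ¬ ∀ j : Fin M, (x.val (i + j)).isSome := by
      intro h
      rw [dif_pos h] at hi
      simp at hi
    push_neg at h1
    obtain ⟨j, hj⟩ := h1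
    have hjn : x.val (i + j) = none := Option.not_isSome_iff_eq_none.mp hj
    have hM : (0 : ℕ) < M := j.pos
    rw [dif_neg]
    intro h2
    have hsome := h2 ⟨M - 1, by omega⟩
    have hnone : x.val (i + 1 + ((⟨M - 1, by omega⟩ : Fin M) : ℕ)) = none := by
      apply val_none_mono x ?_ hjn
      have := j.isLt
      simp only [Fin.val_mk]
      omega
    rw [hnone] at hsome
    simp at hsome



section Aux

variable {A : Type*}

theorem hb_val_some_iff {M : ℕ} (x : FullShift A) (i : ℕ) (B : Fin M → A) :
    (higherBlock M x).val i = some B ↔ ∀ j : Fin M, x.val (i + j) = some (B j) := by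
  show (if h : ∀ j : Fin M, (x.val (i + ↑j)).isSome then
      some (fun j : Fin M => (x.val (i + ↑j)).get (h j)) else none) = some B ↔ _
  by_cases hc : ∀ j : Fin M, (x.val (i + j)).isSome
  · rw [dif_pos hc, Option.some_inj]
    constructor
    · intro h j
      rw [← h]
      exact (Option.some_get (hc j)).symm
    · intro h
      funext j
      exact Option.get_of_mem (hc j) (h j)
  · rw [dif_neg hc]
    constructor
    · intro h; exact absurd h (by simp)
    · intro h
      exact absurd (fun j => by rw [h j]; rfl) hc

theorem hb_val_none_iff {M : ℕ} (hM : 0 < M) (x : FullShift A) (i : ℕ) :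
    (higherBlock M x).val i = none ↔ x.val (i + (M - 1)) = none := by
  show (if h : ∀ j : Fin M, (x.val (i + ↑j)).isSome then
      some (fun j : Fin M => (x.val (i + ↑j)).get (h j)) else none) = none ↔ _
  by_cases hc : ∀ j : Fin M, (x.val (i + j)).isSome
  · rw [dif_pos hc]
    have h1 := hc ⟨M - 1, by omega⟩
    constructor
    · intro h; exact absurd h (by simp)
    · intro h
      rw [show i + (M - 1) = i + ((⟨M - 1, by omega⟩ : Fin M) : ℕ) from rfl] at h
      rw [h] at h1; simp at h1
  · rw [dif_neg hc]
    push_neg at hc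
    obtain ⟨j, hj⟩ := hc
    have hn : x.val (i + j) = none := Option.not_isSome_iff_eq_none.mp hj
    exact ⟨fun _ => val_none_mono x (by have := j.isLt; omega) hn, fun _ => rfl⟩

theorem shiftMap_iterate_val (x : FullShift A) (n i : ℕ) :
    (shiftMap^[n] x).val i = x.val (n + i) := by
  induction n generalizing x with
  | zero => simp
  | succ n ih =>
    rw [Function.iterate_succ_apply, ih]
    show x.val (n + i + 1) = x.val (n + 1 + i)
    congr 1; omega

theorem hb_shiftMap {M : ℕ} (hM : 0 < M) (x : FullShift A) :
    higherBlock M (shiftMap x) = shiftMap (higherBlock M x) := by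
  ext i : 2
  show (higherBlock M (shiftMap x)).val i = (higherBlock M x).val (i + 1)
  cases hY : (higherBlock M x).val (i + 1) with
  | none =>
    rw [hb_val_none_iff hM] at hY ⊢
    show x.val (i + (M - 1) + 1) = none
    rw [show i + (M - 1) + 1 = i + 1 + (M - 1) by omega]; exact hY
  | some B =>
    rw [hb_val_some_iff] at hY ⊢
    intro j
    show x.val (i + j + 1) = some (B j)
    rw [show i + (j : ℕ) + 1 = i + 1 + j by omega]; exact hY j

theorem hb_shiftMap_iterate {M : ℕ} (hM : 0 < M) (x : FullShift A) (n : ℕ) :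
    higherBlock M (shiftMap^[n] x) = shiftMap^[n] (higherBlock M x) := by
  induction n generalizing x with
  | zero => rfl
  | succ n ih =>
    rw [Function.iterate_succ_apply, Function.iterate_succ_apply, ih,
      hb_shiftMap hM]

theorem finSeq_val_lt {w : List A} {i : ℕ} (h : i < w.length) :
    (finSeq w).val i = some (w[i]) := by
  show (w.drop i).head? = some w[i]
  rw [List.head?_drop, List.getElem?_eq_getElem h]

theorem finSeq_val_ge {w : List A} {i : ℕ} (h : w.length ≤ i) :
    (finSeq w).val i = none := by
  show (w.drop i).head? = none
  rw [List.drop_eq_nil_of_le h]; rfl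

theorem eq_emptySeq_iff {x : FullShift A} : x = emptySeq ↔ x.val 0 = none := by
  constructor
  · rintro rfl; rfl
  · intro h
    ext i : 2
    show x.val i = none
    exact val_none_mono x (Nat.zero_le i) h

theorem shift_iterate_mem {Λ : Set (FullShift A)} (hΛ : IsShiftSpace Λ)
    {x : FullShift A} (hx : x ∈ Λ) (n : ℕ) : shiftMap^[n] x ∈ Λ := by
  induction n with
  | zero => exact hx
  | succ n ih => rw [Function.iterate_succ_apply']; exact hΛ.2.1 _ ih

theorem isBlock_iff {Λ : Set (FullShift A)} {w : List A} :
    IsBlock Λ w ↔ ∃ x ∈ Λ, ∃ n, ∀ i (hi : i < w.length), x.val (n + i) = some (w[i]) := by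
  constructor
  · rintro ⟨x, hx, n, h⟩
    exact ⟨x, hx, n, fun i hi => h ⟨i, hi⟩⟩
  · rintro ⟨x, hx, n, h⟩
    exact ⟨x, hx, n, fun i => h i i.isLt⟩

theorem exists_extend {Λ : Set (FullShift A)} (hΛ : IsShiftSpace Λ)
    {w : List A} (hw : w ≠ []) (hb : IsBlock Λ w) : ∃ b, IsBlock Λ (w ++ [b]) := by
  rw [isBlock_iff] at hb
  obtain ⟨x, hx, n, hxw⟩ := hb
  have hyΛ : shiftMap^[n] x ∈ Λ := shift_iterate_mem hΛ hx n
  set y := shiftMap^[n] x with hy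
  have hyw : ∀ i (hi : i < w.length), y.val i = some (w[i]) := fun i hi => by
    rw [hy, shiftMap_iterate_val]; exact hxw i hi
  cases hyb : y.val w.length with
  | some b =>
    refine ⟨b, ?_⟩
    rw [isBlock_iff]
    refine ⟨y, hyΛ, 0, fun i hi => ?_⟩
    rw [List.length_append, List.length_singleton] at hi
    rcases lt_or_ge i w.length with h | h
    · rw [List.getElem_append_left h, Nat.zero_add]; exact hyw i h
    · have : i = w.length := by omega
      subst this
      rw [List.getElem_append_right (le_refl _)]
      simpa using hyb
  | none =>
    have hyfin : y = finSeq w := by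
      ext i : 2
      rcases lt_or_ge i w.length with h | h
      · rw [finSeq_val_lt h]; exact hyw i h
      · rw [finSeq_val_ge h]; exact val_none_mono y h hyb
    have hfin : finSeq w ∈ Λ := hyfin ▸ hyΛ
    obtain ⟨b, hbmem⟩ := ((hΛ.2.2.2 w hw).mp hfin).nonempty
    exact ⟨b, hbmem⟩

theorem exists_extend_len {Λ : Set (FullShift A)} (hΛ : IsShiftSpace Λ)
    {w : List A} (hw : w ≠ []) (hb : IsBlock Λ w) (k : ℕ) :
    ∃ w' : List A, w'.length = k ∧ IsBlock Λ (w ++ w') := by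
  induction k with
  | zero => exact ⟨[], rfl, by simpa using hb⟩
  | succ k ih =>
    obtain ⟨w', hlen, hb'⟩ := ih
    obtain ⟨b, hbb⟩ := exists_extend hΛ (by simp [hw]) hb'
    exact ⟨w' ++ [b], by simp [hlen], by rwa [← List.append_assoc]⟩

theorem isBlock_singleton {Λ : Set (FullShift A)} {a : A} (h : a ∈ letters Λ) :
    IsBlock Λ [a] := by
  obtain ⟨x, hx, i, hxa⟩ := h
  rw [isBlock_iff]
  refine ⟨x, hx, i, fun j hj => ?_⟩
  have hj0 : j = 0 := by simp at hj; omega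
  subst hj0
  simpa using hxa

theorem mem_letters_image {Λ : Set (FullShift A)} {M : ℕ} {B : Fin M → A} :
    B ∈ letters (higherBlock M '' Λ) ↔
      ∃ x ∈ Λ, ∃ i, ∀ j : Fin M, x.val (i + j) = some (B j) := by
  constructor
  · rintro ⟨Y, ⟨x, hx, rfl⟩, i, hYi⟩
    rw [hb_val_some_iff] at hYi
    exact ⟨x, hx, i, hYi⟩
  · rintro ⟨x, hx, i, h⟩
    exact ⟨higherBlock M x, ⟨x, hx, rfl⟩, i, (hb_val_some_iff x i B).mpr h⟩

theorem block_to_image_letter {Λ : Set (FullShift A)} (hΛ : IsShiftSpace Λ)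
    {M : ℕ} {w : List A} (hw : w ≠ []) (hwM : w.length ≤ M) (hb : IsBlock Λ w) :
    ∃ B ∈ letters (higherBlock M '' Λ), ∀ i (hi : i < w.length), B ⟨i, by omega⟩ = w[i] := by
  obtain ⟨w', hlen, hb'⟩ := exists_extend_len hΛ hw hb (M - w.length)
  rw [isBlock_iff] at hb'
  obtain ⟨x, hx, n, hxw⟩ := hb'
  have hlen2 : (w ++ w').length = M := by simp [hlen]; omega
  refine ⟨fun j => (w ++ w')[(j : ℕ)]'(by rw [hlen2]; exact j.isLt), ?_, ?_⟩
  · rw [mem_letters_image]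
    exact ⟨x, hx, n, fun j => hxw j (by rw [hlen2]; exact j.isLt)⟩
  · intro i hi
    exact List.getElem_append_left hi

theorem letters_image_finite {Λ : Set (FullShift A)} {M : ℕ}
    (hfin : (letters Λ).Finite) : (letters (higherBlock M '' Λ)).Finite := by
  refine (Set.Finite.pi (fun _ : Fin M => hfin)).subset ?_
  rintro B hB
  rw [mem_letters_image] at hB
  obtain ⟨x, hx, i, h⟩ := hB
  intro j _
  exact ⟨x, hx, i + j, h j⟩

theorem letters_image_infinite {Λ : Set (FullShift A)} (hΛ : IsShiftSpace Λ)
    {M : ℕ} (hM : 0 < M) [Nonempty A] (hinf : (letters Λ).Infinite) :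
    (letters (higherBlock M '' Λ)).Infinite := by
  classical
  have key : ∀ a ∈ letters Λ, ∃ B ∈ letters (higherBlock M '' Λ), B ⟨0, hM⟩ = a := by
    intro a ha
    obtain ⟨B, hB, hB0⟩ := block_to_image_letter hΛ (w := [a]) (by simp) (by simpa) 
      (isBlock_singleton ha)
    exact ⟨B, hB, by simpa using hB0 0 (by simp)⟩
  choose! f hf1 hf2 using key
  exact Set.infinite_of_injOn_mapsTo
    (fun a ha b hb hab => by rw [← hf2 a ha, ← hf2 b hb, hab]) hf1 hinf

theorem consist_chain {M k : ℕ} (g : ℕ → Fin M → A)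
    (hg : ∀ i j (hik : i + 1 < k) (hj : j + 1 < M),
      g (i + 1) ⟨j, by omega⟩ = g i ⟨j + 1, hj⟩) :
    ∀ d i j (hi : i + d < k) (hj : j < M) (hd : d ≤ j),
      g i ⟨j, hj⟩ = g (i + d) ⟨j - d, by omega⟩ := by
  intro d
  induction d with
  | zero => intro i j hi hj hd; simp
  | succ d ih =>
    intro i j hi hj hd
    have h1 : g i ⟨j, hj⟩ = g (i + 1) ⟨j - 1, by omega⟩ := by
      have h2 := hg i (j - 1) (by omega) (by omega)
      simp only [show j - 1 + 1 = j from by omega] at h2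
      exact h2.symm
    rw [h1, ih (i + 1) (j - 1) (by omega) (by omega) (by omega)]
    simp only [show i + 1 + d = i + (d + 1) from by omega,
      show j - 1 - d = j - (d + 1) from by omega]

theorem consist_full {M k : ℕ} (g : ℕ → Fin M → A)
    (hg : ∀ i j (hik : i + 1 < k) (hj : j + 1 < M),
      g (i + 1) ⟨j, by omega⟩ = g i ⟨j + 1, hj⟩) :
    ∀ i i' j j' (hi : i < k) (hi' : i' < k) (hj : j < M) (hj' : j' < M),
      i + j = i' + j' → g i ⟨j, hj⟩ = g i' ⟨j', hj'⟩ := by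
  intro i i' j j' hi hi' hj hj' hsum
  rcases le_total i i' with h | h
  · have := consist_chain g hg (i' - i) i j (by omega) hj (by omega)
    rw [this]
    simp only [show i + (i' - i) = i' from by omega,
      show j - (i' - i) = j' from by omega]
  · have := consist_chain g hg (i - i') i' j' (by omega) hj' (by omega)
    rw [this]
    simp only [show i' + (i - i') = i from by omega,
      show j' - (i - i') = j from by omega]

/-- The word over `A` determined by a nonempty list of `M`-blocks. -/
def wordOf {M : ℕ} (hM : 0 < M) (W : List (Fin M → A)) (hW : W ≠ []) : List A :=
  List.ofFn (fun t : Fin (W.length + (M - 1)) =>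
    (W[min (t : ℕ) (W.length - 1)]'(by
      have h1 := t.isLt; have h2 : 0 < W.length := List.length_pos_iff.mpr hW; omega))
      ⟨(t : ℕ) - min (t : ℕ) (W.length - 1), by
        have h1 := t.isLt; have h2 : 0 < W.length := List.length_pos_iff.mpr hW; omega⟩)

theorem wordOf_length {M : ℕ} (hM : 0 < M) (W : List (Fin M → A)) (hW : W ≠ []) :
    (wordOf hM W hW).length = W.length + (M - 1) :=
  List.length_ofFn

theorem wordOf_ne_nil {M : ℕ} (hM : 0 < M) (W : List (Fin M → A)) (hW : W ≠ []) :
    wordOf hM W hW ≠ [] := by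
  have h2 : 0 < W.length := List.length_pos_iff.mpr hW
  rw [← List.length_pos_iff, wordOf_length]
  omega

theorem wordOf_getElem {M : ℕ} (hM : 0 < M) (W : List (Fin M → A)) (hW : W ≠ [])
    (t : ℕ) (ht : t < W.length + (M - 1)) :
    (wordOf hM W hW)[t]'(by rw [wordOf_length]; exact ht) =
      (W[min t (W.length - 1)]'(by
        have h2 : 0 < W.length := List.length_pos_iff.mpr hW; omega))
        ⟨t - min t (W.length - 1), by
          have h2 : 0 < W.length := List.length_pos_iff.mpr hW; omega⟩ := by
  simp only [wordOf, List.getElem_ofFn]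

theorem wordOf_spec {M : ℕ} (hM : 0 < M) {W : List (Fin M → A)} (hW : W ≠ [])
    (hcons : ∀ i i' j j' (hi : i < W.length) (hi' : i' < W.length)
      (hj : j < M) (hj' : j' < M), i + j = i' + j' → W[i] ⟨j, hj⟩ = W[i'] ⟨j', hj'⟩) :
    ∀ i j (hi : i < W.length) (hj : j < M),
      W[i] ⟨j, hj⟩ = (wordOf hM W hW)[i + j]'(by rw [wordOf_length]; omega) := by
  intro i j hi hj
  have h2 : 0 < W.length := List.length_pos_iff.mpr hW
  rw [wordOf_getElem hM W hW (i + j) (by omega)]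
  exact hcons i (min (i + j) (W.length - 1)) j ((i + j) - min (i + j) (W.length - 1))
    hi (by omega) hj (by omega) (by omega)

theorem consistent_of_witness {M : ℕ} {x : FullShift A} {n : ℕ} {W : List (Fin M → A)}
    (h : ∀ i (hi : i < W.length), (higherBlock M x).val (n + i) = some (W[i])) :
    ∀ i i' j j' (hi : i < W.length) (hi' : i' < W.length)
      (hj : j < M) (hj' : j' < M), i + j = i' + j' → W[i] ⟨j, hj⟩ = W[i'] ⟨j', hj'⟩ := by
  intro i i' j j' hi hi' hj hj' hsum
  have h1 := (hb_val_some_iff x (n + i) _).mp (h i hi) ⟨j, hj⟩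
  have h2 := (hb_val_some_iff x (n + i') _).mp (h i' hi') ⟨j', hj'⟩
  rw [show n + i + ((⟨j, hj⟩ : Fin M) : ℕ) = n + i' + ((⟨j', hj'⟩ : Fin M) : ℕ) from by
    simp only [Fin.val_mk]; omega] at h1
  rw [h2] at h1
  exact (Option.some_inj.mp h1).symm

theorem witness_val {M : ℕ} (hM : 0 < M) {x : FullShift A} {n : ℕ}
    {W : List (Fin M → A)} (hW : W ≠ [])
    (h : ∀ i (hi : i < W.length), (higherBlock M x).val (n + i) = some (W[i])) :
    ∀ t (ht : t < W.length + (M - 1)),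
      x.val (n + t) = some ((wordOf hM W hW)[t]'(by rw [wordOf_length]; exact ht)) := by
  intro t ht
  have hWl : 0 < W.length := List.length_pos_iff.mpr hW
  rw [wordOf_getElem hM W hW t ht]
  have hiW : min t (W.length - 1) < W.length := by omega
  have hj : t - min t (W.length - 1) < M := by omega
  have h1 := (hb_val_some_iff x (n + min t (W.length - 1)) _).mp (h _ hiW) ⟨t - _, hj⟩
  rw [show n + min t (W.length - 1) + ((⟨t - min t (W.length - 1), hj⟩ : Fin M) : ℕ) = n + t from by
    simp only [Fin.val_mk]; omega] at h1
  exact h1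

theorem hb_finSeq_wordOf {M : ℕ} (hM : 0 < M) {W : List (Fin M → A)} (hW : W ≠ [])
    (hWu : ∀ i j (hi : i < W.length) (hj : j < M),
      W[i] ⟨j, hj⟩ = (wordOf hM W hW)[i + j]'(by rw [wordOf_length]; omega)) :
    higherBlock M (finSeq (wordOf hM W hW)) = finSeq W := by
  have hlen : (wordOf hM W hW).length = W.length + (M - 1) := wordOf_length hM W hW
  ext i : 2
  rcases lt_or_ge i W.length with h | h
  · rw [finSeq_val_lt h, hb_val_some_iff]
    intro j
    rw [finSeq_val_lt (show i + (j : ℕ) < (wordOf hM W hW).length from by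
      rw [hlen]; have := j.isLt; omega)]
    rw [← hWu i j h j.isLt]
  · rw [finSeq_val_ge h, hb_val_none_iff hM]
    apply finSeq_val_ge
    rw [hlen]; omega

theorem isOpen_zcyl (w : List A) (F : Finset A) : IsOpen (Zcyl w F) :=
  TopologicalSpace.isOpen_generateFrom_of_mem ⟨w, F, rfl⟩

theorem mem_zcyl_iff {w : List A} {F : Finset A} {x : FullShift A} :
    x ∈ Zcyl w F ↔ (∀ i (hi : i < w.length), x.val i = some (w[i])) ∧
      ∀ a ∈ F, x.val w.length ≠ some a := by
  constructor
  · rintro ⟨h1, h2⟩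
    exact ⟨fun i hi => by simpa using h1 ⟨i, hi⟩, h2⟩
  · rintro ⟨h1, h2⟩
    exact ⟨fun i => by simpa using h1 i i.isLt, h2⟩

theorem zcyl_inter_aux {w1 w2 : List A} {F1 F2 : Finset A} {x : FullShift A}
    (h1 : x ∈ Zcyl w1 F1) (h2 : x ∈ Zcyl w2 F2) (hle : w1.length ≤ w2.length) :
    ∃ w F, x ∈ Zcyl w F ∧ Zcyl w F ⊆ Zcyl w1 F1 ∩ Zcyl w2 F2 := by
  classical
  rw [mem_zcyl_iff] at h1 h2
  have hpre : ∀ i (hi : i < w1.length), w1[i] = w2[i]'(by omega) := by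
    intro i hi
    have e1 := h1.1 i hi
    have e2 := h2.1 i (by omega)
    rw [e2] at e1
    exact (Option.some_inj.mp e1).symm
  rcases lt_or_eq_of_le hle with hlt | heq
  · refine ⟨w2, F2, mem_zcyl_iff.mpr h2, fun y hy => ⟨?_, hy⟩⟩
    rw [mem_zcyl_iff] at hy ⊢
    refine ⟨fun i hi => by rw [hy.1 i (by omega), hpre i hi], ?_⟩
    intro a ha hcon
    rw [hy.1 w1.length hlt] at hcon
    have : x.val w1.length = some a := by
      rw [h2.1 w1.length hlt]; exact hcon
    exact h1.2 a ha this
  · have hw : w1 = w2 := List.ext_getElem heq (fun i hi _ => hpre i hi)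
    subst hw
    refine ⟨w1, F1 ∪ F2, mem_zcyl_iff.mpr ⟨h1.1, ?_⟩, fun y hy => ?_⟩
    · intro a ha
      rcases Finset.mem_union.mp ha with h | h
      · exact h1.2 a h
      · exact h2.2 a h
    · rw [mem_zcyl_iff] at hy
      constructor <;> rw [mem_zcyl_iff] <;>
        exact ⟨hy.1, fun a ha => hy.2 a (Finset.mem_union.mpr (by tauto))⟩

theorem exists_zcyl_subset {U : Set (FullShift A)} (hU : IsOpen U)
    {x : FullShift A} (hx : x ∈ U) :
    ∃ w F, x ∈ Zcyl w F ∧ Zcyl w F ⊆ U := by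
  have hU' : TopologicalSpace.GenerateOpen
      {S | ∃ (w : List A) (F : Finset A), S = Zcyl w F} U := hU
  clear hU
  induction hU' with
  | basic S hS =>
    obtain ⟨w, F, rfl⟩ := hS
    exact ⟨w, F, hx, subset_rfl⟩
  | univ =>
    refine ⟨[], ∅, ⟨fun i => i.elim0, by simp⟩, Set.subset_univ _⟩
  | inter U V hUo hVo ihU ihV =>
    obtain ⟨w1, F1, hx1, hs1⟩ := ihU hx.1
    obtain ⟨w2, F2, hx2, hs2⟩ := ihV hx.2
    rcases le_total w1.length w2.length with h | h
    · obtain ⟨w, F, hxw, hsw⟩ := zcyl_inter_aux hx1 hx2 h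
      exact ⟨w, F, hxw, fun y hy => ⟨hs1 (hsw hy).1, hs2 (hsw hy).2⟩⟩
    · obtain ⟨w, F, hxw, hsw⟩ := zcyl_inter_aux hx2 hx1 h
      exact ⟨w, F, hxw, fun y hy => ⟨hs1 (hsw hy).2, hs2 (hsw hy).1⟩⟩
  | sUnion S hS ih =>
    obtain ⟨U, hUS, hxU⟩ := hx
    obtain ⟨w, F, h1, h2⟩ := ih U hUS hxU
    exact ⟨w, F, h1, h2.trans (Set.subset_sUnion_of_mem hUS)⟩

theorem isOpen_val_pair (i : ℕ) (B B' : A) :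
    IsOpen {Z : FullShift A | Z.val i = some B ∧ Z.val (i + 1) = some B'} := by
  have heq : {Z : FullShift A | Z.val i = some B ∧ Z.val (i + 1) = some B'} =
      ⋃ (v : List A) (_ : v.length = i), Zcyl (v ++ [B, B']) ∅ := by
    ext Z
    simp only [Set.mem_setOf_eq, Set.mem_iUnion]
    constructor
    · rintro ⟨hB, hB'⟩
      have hsome : ∀ t, t < i → (Z.val t).isSome := by
        intro t ht
        rw [Option.isSome_iff_ne_none]
        intro hn
        rw [val_none_mono Z (le_of_lt ht) hn] at hB
        cases hB
      refine ⟨List.ofFn (fun t : Fin i => (Z.val t).get (hsome t t.isLt)), by simp, ?_⟩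
      rw [mem_zcyl_iff]
      refine ⟨?_, by simp⟩
      intro t ht
      simp only [List.length_append, List.length_ofFn] at ht
      rcases lt_or_ge t i with h | h
      · rw [List.getElem_append_left (by simpa using h)]
        simp only [List.getElem_ofFn]
        exact (Option.some_get _).symm
      · rw [List.getElem_append_right (by simpa using h)]
        simp only [List.length_ofFn]
        rcases Nat.lt_or_ge t (i + 1) with h' | h'
        · have : t = i := by omega
          subst this
          simpa using hB
        · have : t = i + 1 := by simp at ht; omega
          subst this
          have : i + 1 - i = 1 := by omega
          simp only [this]
          simpa using hB'
    · rintro ⟨v, hv, hZ⟩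
      rw [mem_zcyl_iff] at hZ
      subst hv
      have e1 := hZ.1 v.length (by simp)
      have e2 := hZ.1 (v.length + 1) (by simp)
      constructor
      · rw [e1]
        congr 1
        rw [List.getElem_append_right (le_refl _)]
        simp
      · rw [e2]
        congr 1
        rw [List.getElem_append_right (by omega)]
        simp [show v.length + 1 - v.length = 1 from by omega]
  rw [heq]
  exact isOpen_iUnion fun v => isOpen_iUnion fun _ => isOpen_zcyl _ _

/-- Pad the tail of `u` after position `k` into an `M`-block, filling the last slot with `b`. -/
def padBlock {M : ℕ} (u : List A) (k : ℕ) (b : A) : Fin M → A := fun j =>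
  if h : k + (j : ℕ) < u.length then u[k + (j : ℕ)]'h else b

theorem padBlock_apply_lt {M : ℕ} {u : List A} {k : ℕ} {b : A} {j : Fin M}
    (h : k + (j : ℕ) < u.length) : padBlock u k b j = u[k + (j : ℕ)]'h := dif_pos h

theorem padBlock_apply_ge {M : ℕ} {u : List A} {k : ℕ} {b : A} {j : Fin M}
    (h : ¬ k + (j : ℕ) < u.length) : padBlock u k b j = b := dif_neg h

end Aux

/-- the image of a shift space under the `M`-th higher block code is
a shift space in `Σ_{A^(M)}`. -/
theorem higherBlock_image_isShiftSpace {A : Type*} [Countable A] [Infinite A]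
    (M : ℕ) (hM : 0 < M) (Λ : Set (FullShift A)) (hΛ : IsShiftSpace Λ) :
    IsShiftSpace (higherBlock M '' Λ) := by
  classical
  have hemp : emptySeq ∈ higherBlock M '' Λ ↔ ∃ x ∈ Λ, x.val (M - 1) = none := by
    constructor
    · rintro ⟨x, hx, hxe⟩
      refine ⟨x, hx, ?_⟩
      have h0 : (higherBlock M x).val 0 = none := by rw [hxe]; rfl
      rw [hb_val_none_iff hM] at h0
      simpa using h0
    · rintro ⟨x, hx, hxn⟩
      refine ⟨x, hx, ?_⟩
      rw [eq_emptySeq_iff, hb_val_none_iff hM]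
      simpa using hxn
  refine ⟨?_, ?_, ?_, ?_⟩
  · -- closed
    rw [← isOpen_compl_iff, isOpen_iff_forall_mem_open]
    intro Y hY
    rw [Set.mem_compl_iff] at hY
    by_cases hcons : ∀ i (B B' : Fin M → A), Y.val i = some B → Y.val (i + 1) = some B' →
        ∀ j (hj : j + 1 < M), B' ⟨j, by omega⟩ = B ⟨j + 1, hj⟩
    case neg =>
      push_neg at hcons
      obtain ⟨i, B, B', hB, hB', j, hj, hne⟩ := hcons
      refine ⟨{Z : FullShift (Fin M → A) | Z.val i = some B ∧ Z.val (i + 1) = some B'},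
        ?_, isOpen_val_pair i B B', hB, hB'⟩
      intro Z hZ
      simp only [Set.mem_compl_iff]
      rintro ⟨x, hx, rfl⟩
      obtain ⟨hZ1, hZ2⟩ := hZ
      rw [hb_val_some_iff] at hZ1 hZ2
      have e1 := hZ1 ⟨j + 1, hj⟩
      have e2 := hZ2 ⟨j, by omega⟩
      rw [show i + 1 + ((⟨j, by omega⟩ : Fin M) : ℕ) = i + ((⟨j + 1, hj⟩ : Fin M) : ℕ) from by
        simp only [Fin.val_mk]; omega, e1] at e2
      exact hne (Option.some_inj.mp e2).symm
    case pos =>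
      rcases hY0 : Y.val 0 with _ | B0
      · -- case Y = emptySeq
        have hYe : Y = emptySeq := eq_emptySeq_iff.mpr hY0
        have hnone : ¬ ∃ x ∈ Λ, x.val (M - 1) = none := fun h => hY (hYe ▸ hemp.mpr h)
        have hlf : (letters Λ).Finite := by
          by_contra h
          exact hnone ⟨emptySeq, hΛ.2.2.1.mpr h, rfl⟩
        have hGfin : {B : Fin M → A | ∀ j, B j ∈ letters Λ}.Finite :=
          (Set.Finite.pi (fun _ : Fin M => hlf)).subset (fun B hB j _ => hB j)
        refine ⟨Zcyl [] hGfin.toFinset, ?_, isOpen_zcyl _ _, ?_⟩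
        · intro Z hZ
          simp only [Set.mem_compl_iff]
          rintro ⟨x, hx, rfl⟩
          rw [mem_zcyl_iff] at hZ
          cases hx0 : (higherBlock M x).val 0 with
          | none =>
            rw [hb_val_none_iff hM] at hx0
            exact hnone ⟨x, hx, by simpa using hx0⟩
          | some B =>
            refine hZ.2 B ?_ hx0
            rw [Set.Finite.mem_toFinset]
            intro j
            rw [hb_val_some_iff] at hx0
            exact ⟨x, hx, 0 + j, hx0 j⟩
        · rw [hYe, mem_zcyl_iff]
          exact ⟨fun i hi => absurd hi (by simp), fun a _ h => by cases h⟩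
      · -- Y starts with a block
        by_cases hfin : ∃ t, Y.val t = none
        · -- case Y finite (and consistent)
          have hex : ∃ t, Y.val t = none := hfin
          have hk : Y.val (Nat.find hex) = none := Nat.find_spec hex
          set k := Nat.find hex with hkdef
          have hklt : ∀ t, t < k → (Y.val t).isSome := fun t ht =>
            Option.isSome_iff_ne_none.mpr (Nat.find_min hex ht)
          have hk1 : 1 ≤ k := by
            rcases Nat.eq_zero_or_pos k with h | h
            · rw [h] at hk; rw [hk] at hY0; cases hY0
            · exact h
          set W := List.ofFn (fun t : Fin k => (Y.val t).get (hklt t t.isLt)) with hWdef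
          have hWlen : W.length = k := by rw [hWdef, List.length_ofFn]
          have hWne : W ≠ [] := by rw [← List.length_pos_iff, hWlen]; omega
          have hWval : ∀ i (hi : i < k), Y.val i = some (W[i]'(by rw [hWlen]; exact hi)) := by
            intro i hi
            simp only [hWdef, List.getElem_ofFn]
            exact (Option.some_get _).symm
          have hWcons : ∀ i i' j j' (hi : i < W.length) (hi' : i' < W.length)
              (hj : j < M) (hj' : j' < M), i + j = i' + j' →
              W[i] ⟨j, hj⟩ = W[i'] ⟨j', hj'⟩ := by
            intro i i' j j' hi hi' hj hj' hsum
            have hfull := consist_full (M := M) (k := k)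
              (fun t => if h : t < W.length then W[t]'h else fun _ => Classical.arbitrary A)
              ?_ i i' j j' (by omega) (by omega) hj hj' hsum
            · rwa [dif_pos hi, dif_pos hi'] at hfull
            · intro a b hik hb
              rw [dif_pos (show a + 1 < W.length from by omega),
                dif_pos (show a < W.length from by omega)]
              have e1 := hWval a (by omega)
              have e2 := hWval (a + 1) (by omega)
              exact hcons a _ _ e1 e2 b hb
          have hWu := wordOf_spec hM hWne hWcons
          have hulen : (wordOf hM W hWne).length = W.length + (M - 1) :=
            wordOf_length hM W hWne
          have hune := wordOf_ne_nil hM W hWne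
          set u := wordOf hM W hWne with hu
          have hYfs : Y = finSeq W := by
            ext t : 2
            rcases lt_or_ge t k with h | h
            · rw [finSeq_val_lt (by rw [hWlen]; exact h)]
              exact hWval t h
            · rw [finSeq_val_ge (by rw [hWlen]; exact h)]
              exact val_none_mono Y h hk
          have hufΛ : finSeq u ∉ Λ := by
            intro hmem
            refine hY ⟨finSeq u, hmem, ?_⟩
            rw [hu]
            exact (hb_finSeq_wordOf hM hWne hWu).trans hYfs.symm
          obtain ⟨w, F, hwmem, hwsub⟩ := exists_zcyl_subset hΛ.1.isOpen_compl hufΛ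
          rw [mem_zcyl_iff] at hwmem
          have hwle : w.length ≤ u.length := by
            by_contra h
            push_neg at h
            have h2 := hwmem.1 u.length h
            rw [finSeq_val_ge (le_refl _)] at h2
            cases h2
          have hwpre : ∀ i (hi : i < w.length), w[i] = u[i]'(by omega) := by
            intro i hi
            have h2 := hwmem.1 i hi
            rw [finSeq_val_lt (show i < u.length from by omega)] at h2
            exact (Option.some_inj.mp h2).symm
          rcases lt_or_eq_of_le hwle with hlt | heqlen
          · -- w shorter than u
            refine ⟨Zcyl W ∅, ?_, isOpen_zcyl _ _, ?_⟩
            · intro Z hZ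
              simp only [Set.mem_compl_iff]
              rintro ⟨x, hx, rfl⟩
              rw [mem_zcyl_iff] at hZ
              have hxpre : ∀ i (hi : i < W.length),
                  (higherBlock M x).val (0 + i) = some (W[i]) := by
                intro i hi; rw [Nat.zero_add]; exact hZ.1 i hi
              have hxu := witness_val hM hWne hxpre
              refine hwsub (show x ∈ Zcyl w F from ?_) hx
              rw [mem_zcyl_iff]
              constructor
              · intro i hi
                have h2 := hxu i (by rw [hulen] at *; omega)
                rw [Nat.zero_add] at h2
                rw [hwpre i hi]
                exact h2
              · intro a ha hcon
                have h1 := hxu w.length (by rw [hulen] at *; omega)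
                rw [Nat.zero_add] at h1
                rw [h1] at hcon
                refine hwmem.2 a ha ?_
                rw [finSeq_val_lt hlt]
                rw [Option.some_inj.mp hcon]
            · rw [mem_zcyl_iff]
              refine ⟨?_, by simp⟩
              intro i hi
              rw [hWlen] at hi
              exact hWval i hi
          · -- w has the same length as u
            refine ⟨Zcyl W (F.image (fun a => padBlock u W.length a)), ?_,
              isOpen_zcyl _ _, ?_⟩
            · intro Z hZ
              simp only [Set.mem_compl_iff]
              rintro ⟨x, hx, rfl⟩
              rw [mem_zcyl_iff] at hZ
              have hxpre : ∀ i (hi : i < W.length),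
                  (higherBlock M x).val (0 + i) = some (W[i]) := by
                intro i hi; rw [Nat.zero_add]; exact hZ.1 i hi
              have hxu := witness_val hM hWne hxpre
              cases hxl : x.val u.length with
              | none =>
                have hxeq : x = finSeq u := by
                  ext t : 2
                  rcases lt_or_ge t u.length with h | h
                  · rw [finSeq_val_lt h]
                    have h2 := hxu t (by rw [hulen] at *; omega)
                    rwa [Nat.zero_add] at h2
                  · rw [finSeq_val_ge h]
                    exact val_none_mono x h hxl
                exact hufΛ (hxeq ▸ hx)
              | some a =>
                have hblk : (higherBlock M x).val W.length
                    = some (padBlock u W.length a) := by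
                  rw [hb_val_some_iff]
                  intro j
                  by_cases hj : W.length + (j : ℕ) < u.length
                  · rw [padBlock_apply_lt hj]
                    have h2 := hxu (W.length + j) (by rw [hulen] at *; omega)
                    rwa [Nat.zero_add] at h2
                  · rw [padBlock_apply_ge hj]
                    have hjeq : W.length + (j : ℕ) = u.length := by
                      rw [hulen] at *; have := j.isLt; omega
                    rw [hjeq]
                    exact hxl
                have haF : a ∉ F := fun haF =>
                  hZ.2 (padBlock u W.length a) (Finset.mem_image_of_mem _ haF) hblk
                refine hwsub (show x ∈ Zcyl w F from ?_) hx
                rw [mem_zcyl_iff]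
                constructor
                · intro i hi
                  have h2 := hxu i (by rw [hulen] at *; omega)
                  rw [Nat.zero_add] at h2
                  rw [hwpre i hi]
                  exact h2
                · intro a' ha' hcon
                  rw [heqlen, hxl] at hcon
                  rw [← Option.some_inj.mp hcon] at ha'
                  exact haF ha'
            · rw [mem_zcyl_iff]
              refine ⟨?_, ?_⟩
              · intro i hi
                rw [hWlen] at hi
                exact hWval i hi
              · intro Bb _ hcon
                rw [hWlen, hk] at hcon
                cases hcon
        · -- case Y infinite (all entries are blocks)
          push_neg at hfin
          have hsome : ∀ t, (Y.val t).isSome := fun t =>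
            Option.isSome_iff_ne_none.mpr (hfin t)
          set x : FullShift A :=
            ⟨fun t => some ((Y.val t).get (hsome t) ⟨0, hM⟩),
              fun t ht => by cases ht⟩ with hxdef
          have hHB : higherBlock M x = Y := by
            ext i : 2
            cases hYi : Y.val i with
            | none => exact absurd hYi (hfin i)
            | some B =>
              rw [hb_val_some_iff]
              intro j
              show some ((Y.val (i + j)).get (hsome (i + j)) ⟨0, hM⟩) = some (B j)
              have hgc : ∀ a b (hik : a + 1 < i + (j : ℕ) + 2) (hb : b + 1 < M),
                  (fun t => (Y.val t).get (hsome t)) (a + 1) ⟨b, by omega⟩ =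
                    (fun t => (Y.val t).get (hsome t)) a ⟨b + 1, hb⟩ := by
                intro a b hik hb
                simp only
                exact hcons a _ _ (Option.some_get _).symm (Option.some_get _).symm b hb
              have hfull := consist_full (k := i + (j : ℕ) + 2)
                (fun t => (Y.val t).get (hsome t)) hgc
                (i + j) i 0 (j : ℕ) (by omega) (by omega) hM j.isLt (by omega)
              have h2 : (Y.val i).get (hsome i) = B := Option.get_of_mem _ hYi
              refine congrArg some ?_
              calc (Y.val (i + (j : ℕ))).get (hsome (i + (j : ℕ))) ⟨0, hM⟩
                  = (Y.val i).get (hsome i) ⟨(j : ℕ), j.isLt⟩ := hfull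
                _ = B ⟨(j : ℕ), j.isLt⟩ := by rw [h2]
                _ = B j := by rw [Fin.eta]
          have hxΛ : x ∉ Λ := fun hmem => hY ⟨x, hmem, hHB⟩
          obtain ⟨w, F, hwmem, hwsub⟩ := exists_zcyl_subset hΛ.1.isOpen_compl hxΛ
          rw [mem_zcyl_iff] at hwmem
          set W2 := List.ofFn (fun t : Fin (w.length + 1) => (Y.val t).get (hsome t))
            with hW2def
          refine ⟨Zcyl W2 ∅, ?_, isOpen_zcyl _ _, ?_⟩
          · intro Z hZ
            simp only [Set.mem_compl_iff]
            rintro ⟨x', hx', rfl⟩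
            rw [mem_zcyl_iff] at hZ
            have hx'val : ∀ i (hi : i ≤ w.length) (j : Fin M),
                x'.val (i + j) = some ((Y.val i).get (hsome i) j) := by
              intro i hi j
              have h1 := hZ.1 i (by rw [hW2def, List.length_ofFn]; omega)
              simp only [hW2def, List.getElem_ofFn] at h1
              rw [hb_val_some_iff] at h1
              exact h1 j
            refine hwsub (show x' ∈ Zcyl w F from ?_) hx'
            rw [mem_zcyl_iff]
            constructor
            · intro i hi
              have h1 := hx'val i (by omega) ⟨0, hM⟩
              rw [show i + ((⟨0, hM⟩ : Fin M) : ℕ) = i from by simp] at h1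
              rw [h1]
              exact hwmem.1 i hi
            · intro a ha hcon
              have h1 := hx'val w.length (le_refl _) ⟨0, hM⟩
              rw [show w.length + ((⟨0, hM⟩ : Fin M) : ℕ) = w.length from by simp] at h1
              rw [h1] at hcon
              exact hwmem.2 a ha hcon
          · rw [mem_zcyl_iff]
            refine ⟨?_, by simp⟩
            intro i hi
            simp only [hW2def, List.getElem_ofFn]
            exact (Option.some_get _).symm
  · -- shift invariant
    rintro Y ⟨x, hx, rfl⟩
    exact ⟨shiftMap x, hΛ.2.1 x hx, hb_shiftMap hM x⟩
  · -- empty sequence / infinitely many letters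
    rw [hemp]
    constructor
    · rintro ⟨x, hx, hxn⟩
      rcases hx0 : x.val 0 with _ | a
      · have hxe : x = emptySeq := eq_emptySeq_iff.mpr hx0
        exact letters_image_infinite hΛ hM (hΛ.2.2.1.mp (hxe ▸ hx))
      · have hex : ∃ t, x.val t = none := ⟨M - 1, hxn⟩
        set L := Nat.find hex with hLdef
        have hL : x.val L = none := Nat.find_spec hex
        have hLlt : ∀ t, t < L → (x.val t).isSome := by
          intro t ht
          rw [Option.isSome_iff_ne_none]
          exact Nat.find_min hex ht
        have hL1 : 1 ≤ L := by
          rcases Nat.eq_zero_or_pos L with h | h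
          · rw [h] at hL; rw [hL] at hx0; cases hx0
          · exact h
        have hLM : L ≤ M - 1 := Nat.find_min' hex hxn
        set u := List.ofFn (fun t : Fin L => (x.val t).get (hLlt t t.isLt)) with hu
        have hulen : u.length = L := by rw [hu, List.length_ofFn]
        have hune : u ≠ [] := by
          rw [← List.length_pos_iff, hulen]; omega
        have hxu : x = finSeq u := by
          ext t : 2
          rcases lt_or_ge t L with h | h
          · rw [finSeq_val_lt (by rw [hulen]; exact h)]
            simp only [hu, List.getElem_ofFn]
            exact (Option.some_get _).symm
          · rw [finSeq_val_ge (by rw [hulen]; exact h)]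
            exact val_none_mono x h hL
        have hS := (hΛ.2.2.2 u hune).mp (hxu ▸ hx)
        have key : ∀ b ∈ {b : A | IsBlock Λ (u ++ [b])},
            ∃ B ∈ letters (higherBlock M '' Λ), B ⟨L, by omega⟩ = b := by
          intro b hb
          obtain ⟨B, hB, hBi⟩ := block_to_image_letter hΛ (w := u ++ [b]) (by simp)
            (show (u ++ [b]).length ≤ M by simp [hulen]; omega) hb
          refine ⟨B, hB, ?_⟩
          have h2 := hBi L (by simp [hulen])
          rw [show (u ++ [b])[L]'(by simp [hulen]) = b from by
            rw [List.getElem_append_right (by omega)]; simp [hulen]] at h2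
          exact h2
        choose! f hf1 hf2 using key
        exact Set.infinite_of_injOn_mapsTo
          (fun b hb b' hb' hbb => by rw [← hf2 b hb, ← hf2 b' hb', hbb]) hf1 hS
    · intro hinf
      have hLinf : (letters Λ).Infinite := by
        by_contra hfin
        rw [Set.not_infinite] at hfin
        exact hinf (letters_image_finite hfin)
      exact ⟨emptySeq, hΛ.2.2.1.mpr hLinf, rfl⟩
  · -- infinite extension property
    intro W hW
    constructor
    · rintro ⟨x, hx, hxW⟩
      have hpre : ∀ i (hi : i < W.length), (higherBlock M x).val (0 + i) = some (W[i]) := by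
        intro i hi
        rw [Nat.zero_add, hxW, finSeq_val_lt hi]
      have hWcons := consistent_of_witness hpre
      have hWu := wordOf_spec hM hW hWcons
      have hulen : (wordOf hM W hW).length = W.length + (M - 1) := wordOf_length hM W hW
      have hune := wordOf_ne_nil hM W hW
      set u := wordOf hM W hW with hu
      have hxu : x = finSeq u := by
        ext t : 2
        rcases lt_or_ge t u.length with h | h
        · rw [finSeq_val_lt h]
          have h2 := witness_val hM hW hpre t (by rw [← hulen]; exact h)
          rw [Nat.zero_add] at h2
          exact h2
        · rw [finSeq_val_ge h]
          have hnone : (higherBlock M x).val W.length = none := by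
            rw [hxW]; exact finSeq_val_ge (le_refl _)
          rw [hb_val_none_iff hM] at hnone
          exact val_none_mono x (by rw [hulen] at h; omega) hnone
      have hS := (hΛ.2.2.2 u hune).mp (hxu ▸ hx)
      have hglast : ∀ b : A, padBlock (M := M) u W.length b ⟨M - 1, by omega⟩ = b :=
        fun b => padBlock_apply_ge (by simp only [Fin.val_mk]; rw [hulen]; omega)
      have hmaps : ∀ b ∈ {b : A | IsBlock Λ (u ++ [b])},
          IsBlock (higherBlock M '' Λ) (W ++ [padBlock u W.length b]) := by
        intro b hb
        obtain ⟨z, hz, n, hzu⟩ := isBlock_iff.mp hb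
        refine isBlock_iff.mpr ⟨higherBlock M z, ⟨z, hz, rfl⟩, n, ?_⟩
        intro i hi
        rw [List.length_append, List.length_singleton] at hi
        rcases lt_or_ge i W.length with h | h
        · rw [List.getElem_append_left h, hb_val_some_iff]
          intro j
          have hlt : i + (j : ℕ) < u.length := by
            rw [hulen]; have := j.isLt; omega
          have h1 := hzu (i + j) (by simp only [List.length_append]; omega)
          rw [List.getElem_append_left hlt] at h1
          have h2 := hWu i (j : ℕ) h j.isLt
          simp only [Fin.eta] at h2
          rw [h2, show n + i + (j : ℕ) = n + (i + j) from by omega]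
          exact h1
        · have hieq : i = W.length := by omega
          subst hieq
          rw [List.getElem_append_right (le_refl _)]
          simp only [Nat.sub_self, List.getElem_cons_zero]
          rw [hb_val_some_iff]
          intro j
          by_cases hj : W.length + (j : ℕ) < u.length
          · have h1 := hzu (W.length + j) (by simp only [List.length_append]; omega)
            rw [List.getElem_append_left hj] at h1
            rw [padBlock_apply_lt hj,
              show n + W.length + (j : ℕ) = n + (W.length + j) from by omega]
            exact h1
          · have hjeq : W.length + (j : ℕ) = u.length := by
              rw [hulen] at hj ⊢; have := j.isLt; omega
            have h1 := hzu (W.length + j)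
              (by simp only [List.length_append, List.length_singleton]; omega)
            rw [List.getElem_append_right (by omega)] at h1
            rw [padBlock_apply_ge hj,
              show n + W.length + (j : ℕ) = n + (W.length + j) from by omega]
            rw [h1]
            congr 1
            simp [hjeq]
      have hinj : Set.InjOn (padBlock (M := M) u W.length)
          {b : A | IsBlock Λ (u ++ [b])} := by
        intro b _ b' _ hbb
        have := congrFun hbb ⟨M - 1, by omega⟩
        rwa [hglast, hglast] at this
      exact Set.infinite_of_injOn_mapsTo hinj hmaps hS
    · intro hinf
      obtain ⟨B0, hB0⟩ := hinf.nonempty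
      obtain ⟨Y, hY, n, hYW⟩ := isBlock_iff.mp hB0
      obtain ⟨x, hx, rfl⟩ := hY
      have hWit : ∀ i (hi : i < W.length), (higherBlock M x).val (n + i) = some (W[i]) := by
        intro i hi
        have h1 := hYW i (by simp only [List.length_append, List.length_singleton]; omega)
        rwa [List.getElem_append_left hi] at h1
      have hWcons := consistent_of_witness hWit
      have hWu := wordOf_spec hM hW hWcons
      have hulen : (wordOf hM W hW).length = W.length + (M - 1) := wordOf_length hM W hW
      have hune := wordOf_ne_nil hM W hW
      set u := wordOf hM W hW with hu
      -- facts about an arbitrary follower block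
      have hfacts : ∀ B ∈ {B : Fin M → A | IsBlock (higherBlock M '' Λ) (W ++ [B])},
          IsBlock Λ (u ++ [B ⟨M - 1, by omega⟩]) ∧
            ∀ j (hj : j < M - 1), B ⟨j, by omega⟩ = u[W.length + j]'(by rw [hulen]; omega) := by
        intro B hB
        obtain ⟨Y', hY', m, hYW'⟩ := isBlock_iff.mp hB
        obtain ⟨z, hz, rfl⟩ := hY'
        have hWit' : ∀ i (hi : i < W.length), (higherBlock M z).val (m + i) = some (W[i]) := by
          intro i hi
          have h1 := hYW' i (by simp only [List.length_append, List.length_singleton]; omega)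
          rwa [List.getElem_append_left hi] at h1
        have hBlast : (higherBlock M z).val (m + W.length) = some B := by
          have h1 := hYW' W.length (by simp)
          rwa [List.getElem_concat_length rfl] at h1
        constructor
        · refine isBlock_iff.mpr ⟨z, hz, m, ?_⟩
          intro t ht
          rcases lt_or_ge t u.length with h | h
          · rw [List.getElem_append_left h]
            exact witness_val hM hW hWit' t (by rw [← hulen]; exact h)
          · have hteq : t = u.length := by
              simp only [List.length_append, List.length_singleton] at ht; omega
            subst hteq
            rw [List.getElem_concat_length rfl]
            have h1 := (hb_val_some_iff z (m + W.length) B).mp hBlast ⟨M - 1, by omega⟩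
            rwa [show m + W.length + ((⟨M - 1, by omega⟩ : Fin M) : ℕ) = m + u.length from by
              simp only [Fin.val_mk]; rw [hulen]; omega] at h1
        · intro j hj
          have h1 := (hb_val_some_iff z (m + W.length) B).mp hBlast ⟨j, by omega⟩
          have h2 := witness_val hM hW hWit' (W.length + j) (by omega)
          rw [show m + W.length + ((⟨j, by omega⟩ : Fin M) : ℕ) = m + (W.length + j) from by
            simp only [Fin.val_mk]; omega, h2] at h1
          exact (Option.some_inj.mp h1).symm
      have hinj : Set.InjOn (fun B : Fin M → A => B ⟨M - 1, by omega⟩)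
          {B : Fin M → A | IsBlock (higherBlock M '' Λ) (W ++ [B])} := by
        intro B hB B' hB' hbb
        funext j
        rcases lt_or_ge (j : ℕ) (M - 1) with h | h
        · have e1 := (hfacts B hB).2 j h
          have e2 := (hfacts B' hB').2 j h
          have e3 : B ⟨(j : ℕ), j.isLt⟩ = B' ⟨(j : ℕ), j.isLt⟩ := e1.trans e2.symm
          simpa only [Fin.eta] using e3
        · have hj : j = ⟨M - 1, by omega⟩ :=
            Fin.ext (show (j : ℕ) = M - 1 by have := j.isLt; omega)
          rw [hj]
          exact hbb
      have hSinf : {b : A | IsBlock Λ (u ++ [b])}.Infinite :=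
        Set.infinite_of_injOn_mapsTo hinj (fun B hB => (hfacts B hB).1) hinf
      exact ⟨finSeq u, (hΛ.2.2.2 u hune).mpr hSinf, hb_finSeq_wordOf hM hW hWu⟩

end OTW
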